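/- Let T be a labeled transition system, let B be the weighted Büchi automaton constructed from non-blocking generalized Büchi automata G_1, …, G_n with rewards rew_1 ≥ … ≥ rew_n, and let P = T ⊗ B. For every trace τ of T and every accepting run ρ'_P of P with α(ρ'_P) = τ, it holds that C(ρ'_P) ≤ Rew(τ). -/

import Mathlib

/-! Common definitions: labeled transition systems, Büchi automata,
generalized Büchi automata, products, weighted runs, fragments, rewards. -/

/-- A labeled transition system `T = (S, s_init, R, L)`. -/
structure LTS (S : Type*) (A : Type*) where
  init : S
  trans : Set (S × S)
  label : S → A

namespace LTS

/-- An (infinite) trace of a transition system. -/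
def IsTrace {S A : Type*} (T : LTS S A) (τ : ℕ → S) : Prop :=
  τ 0 = T.init ∧ ∀ i, (τ i, τ (i + 1)) ∈ T.trans

/-- The word produced by a trace. -/
def word {S A : Type*} (T : LTS S A) (τ : ℕ → S) : ℕ → A :=
  fun i => T.label (τ i)

end LTS

/-- A Büchi automaton `(Q, q_init, Σ, δ, F)`. -/
structure BA (Q : Type*) (A : Type*) where
  init : Q
  trans : Set (Q × A × Q)
  acc : Set Q

namespace BA

/-- A run of a Büchi automaton over an infinite word. -/
def IsRun {Q A : Type*} (M : BA Q A) (w : ℕ → A) (ρ : ℕ → Q) : Prop :=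
  ρ 0 = M.init ∧ ∀ i, (ρ i, w i, ρ (i + 1)) ∈ M.trans

/-- A run is accepting if it visits the accepting set infinitely often. -/
def IsAccepting {Q A : Type*} (M : BA Q A) (ρ : ℕ → Q) : Prop :=
  ∀ N, ∃ i, N ≤ i ∧ ρ i ∈ M.acc

/-- The language of a Büchi automaton. -/
def Lang {Q A : Type*} (M : BA Q A) : Set (ℕ → A) :=
  {w | ∃ ρ, M.IsRun w ρ ∧ M.IsAccepting ρ}

/-- A Büchi automaton is non-blocking if every state has a successor on every letter. -/
def NonBlocking {Q A : Type*} (M : BA Q A) : Prop :=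
  ∀ q σ, ∃ q', (q, σ, q') ∈ M.trans

end BA

/-- A generalized Büchi automaton with `m` acceptance sets `F_1, …, F_m`
(0-indexed as `acc 0, …, acc (m-1)`). -/
structure GBA (Q : Type*) (A : Type*) (m : ℕ) where
  init : Q
  trans : Set (Q × A × Q)
  acc : Fin m → Set Q

namespace GBA

/-- A run of a generalized Büchi automaton over an infinite word. -/
def IsRun {Q A : Type*} {m : ℕ} (M : GBA Q A m) (w : ℕ → A) (ρ : ℕ → Q) : Prop :=
  ρ 0 = M.init ∧ ∀ i, (ρ i, w i, ρ (i + 1)) ∈ M.trans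

/-- A run is accepting if it visits each acceptance set infinitely often. -/
def IsAccepting {Q A : Type*} {m : ℕ} (M : GBA Q A m) (ρ : ℕ → Q) : Prop :=
  ∀ l : Fin m, ∀ N, ∃ i, N ≤ i ∧ ρ i ∈ M.acc l

/-- The language of a generalized Büchi automaton. -/
def Lang {Q A : Type*} {m : ℕ} (M : GBA Q A m) : Set (ℕ → A) :=
  {w | ∃ ρ, M.IsRun w ρ ∧ M.IsAccepting ρ}

/-- A GBA is non-blocking if every state has a successor on every letter. -/
def NonBlocking {Q A : Type*} {m : ℕ} (M : GBA Q A m) : Prop :=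
  ∀ q σ, ∃ q', (q, σ, q') ∈ M.trans

end GBA

/-- Transitions of the product automaton `P = T ⊗ B`. -/
def ProdTrans {S A Q : Type*} (T : LTS S A) (M : BA Q A) : Set ((S × Q) × (S × Q)) :=
  {t | (t.1.1, t.2.1) ∈ T.trans ∧ (t.1.2, T.label t.1.1, t.2.2) ∈ M.trans}

/-- Accepting states `F_P = S × F` of the product automaton. -/
def ProdAcc {S A Q : Type*} (_T : LTS S A) (M : BA Q A) : Set (S × Q) :=
  {p | p.2 ∈ M.acc}

/-- A run of the product automaton `P = T ⊗ B`. -/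
def IsProdRun {S A Q : Type*} (T : LTS S A) (M : BA Q A) (ρ : ℕ → S × Q) : Prop :=
  ρ 0 = (T.init, M.init) ∧ ∀ i, (ρ i, ρ (i + 1)) ∈ ProdTrans T M

/-- An accepting run of the product automaton (visits `F_P` infinitely often). -/
def IsProdAccepting {S A Q : Type*} (T : LTS S A) (M : BA Q A) (ρ : ℕ → S × Q) : Prop :=
  ∀ N, ∃ i, N ≤ i ∧ ρ i ∈ ProdAcc T M

/-- The weight of the `j`-th step of a sequence of product states, where `W` is the
weight function of the underlying weighted Büchi automaton:
`W_P(((s,q),(s',q'))) = W((q, L(s), q'))`. -/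
def ProdStepW {S A Q : Type*} (T : LTS S A) (W : Q → A → Q → ℕ) (ρ : ℕ → S × Q)
    (j : ℕ) : ℕ :=
  W (ρ j).2 (T.label (ρ j).1) (ρ (j + 1)).2

/-- `ρ i … ρ k` is a fragment of the infinite run `ρ` (w.r.t. accepting set `F`):
both endpoints are accepting and no interior state is accepting. -/
def IsFragment {X : Type*} (F : Set X) (ρ : ℕ → X) (i k : ℕ) : Prop :=
  i < k ∧ ρ i ∈ F ∧ ρ k ∈ F ∧ ∀ j, i < j → j < k → ρ j ∉ F

/-- Total weight of the segment from position `i` to position `k`, where `stepW j`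
is the weight of the transition taken at position `j`. -/
def SegWeight (stepW : ℕ → ℕ) (i k : ℕ) : ℕ :=
  ∑ j ∈ Finset.Ico i k, stepW j

/-- The reward `C(ρ)` of the run `ρ` equals `c`: `c` is the maximum value that occurs
infinitely often in the sequence of fragment weights of `ρ`, i.e. fragments of weight `c`
occur infinitely often, and every value `v > c` occurs only finitely often. -/
def RunRewardIs {X : Type*} (F : Set X) (ρ : ℕ → X) (stepW : ℕ → ℕ) (c : ℕ) : Prop :=
  (∀ N, ∃ i k, N ≤ i ∧ IsFragment F ρ i k ∧ SegWeight stepW i k = c) ∧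
  (∀ v, c < v → ∃ N, ∀ i k, N ≤ i → IsFragment F ρ i k → SegWeight stepW i k ≠ v)

/-- A run is in prefix-suffix structure `ρ_pref · (ρ_suf)^ω` (with the first state
of `ρ_suf` accepting) iff it is eventually periodic with an accepting state at the
start of the periodic part. -/
def IsPrefixSuffix {X : Type*} (F : Set X) (ρ : ℕ → X) : Prop :=
  ∃ l k, 0 < k ∧ ρ l ∈ F ∧ ∀ i, l ≤ i → ρ (i + k) = ρ i

/-- `f 0 f 1 … f k` is a finite path w.r.t. the edge relation `E`. -/
def IsFinPath {X : Type*} (E : Set (X × X)) (f : ℕ → X) (k : ℕ) : Prop :=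
  ∀ t, t < k → (f t, f (t + 1)) ∈ E

/-- A fragment of a finite cycle `f 0 … f k`: a segment whose endpoints lie in `F` and
whose interior states do not. -/
def IsCycFrag {X : Type*} (F : Set X) (f : ℕ → X) (k i k' : ℕ) : Prop :=
  i < k' ∧ k' ≤ k ∧ f i ∈ F ∧ f k' ∈ F ∧ ∀ t, i < t → t < k' → f t ∉ F

section Construction

/-- The component set `C = {(j,l) : 1 ≤ j ≤ n, 1 ≤ l ≤ m_j} ∪ {(0,0)}` of the weighted
Büchi automaton `B`; `none` plays the role of `(0,0)` and `some ⟨j,l⟩` (0-indexed) the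
role of the component `(j+1, l+1)`. -/
abbrev BComp (n : ℕ) (m : Fin n → ℕ) : Type :=
  Option (Σ j : Fin n, Fin (m j))

variable {A : Type*} {n : ℕ} {Qs : Fin n → Type*} {m : Fin n → ℕ}

/-- The allowed moves between components of the weighted Büchi automaton `B`
(cases (1a), (1b), (2a), (2b), (2c), (2d)); `q` is the source tuple of GBA states. -/
def CompStep (G : ∀ j, GBA (Qs j) A (m j)) (q : ∀ j, Qs j) :
    BComp n m → BComp n m → Prop
  | none, none => True
  | none, some jl' => (jl'.2 : ℕ) = 0
  | some jl, none => (jl.2 : ℕ) + 1 = m jl.1 ∧ q jl.1 ∈ (G jl.1).acc jl.2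
  | some jl, some jl' =>
      (jl'.1 = jl.1 ∧ (jl'.2 : ℕ) = (jl.2 : ℕ) ∧ q jl.1 ∉ (G jl.1).acc jl.2) ∨
      (jl'.1 = jl.1 ∧ (jl'.2 : ℕ) = (jl.2 : ℕ) + 1 ∧ q jl.1 ∈ (G jl.1).acc jl.2) ∨
      ((jl.1 : ℕ) < (jl'.1 : ℕ) ∧ (jl.2 : ℕ) + 1 = m jl.1 ∧ (jl'.2 : ℕ) = 0 ∧
        q jl.1 ∈ (G jl.1).acc jl.2)

/-- The weight of a transition of `B`, determined by the source and target components: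
`rew j'` when newly entering the first component of layer `j'` (cases (1b), (2c)),
and `0` otherwise. -/
def CompWeight (rew : Fin n → ℕ) : BComp n m → BComp n m → ℕ
  | _, none => 0
  | c, some jl' => if (jl'.2 : ℕ) = 0 ∧ c ≠ some jl' then rew jl'.1 else 0

/-- The weighted Büchi automaton `B` built from the non-blocking GBAs `G 0, …, G (n-1)`:
state set `Q_1 × … × Q_n × C`, initial state `(q_init,1, …, q_init,n, (0,0))`,
accepting set `Q_1 × … × Q_n × {(0,0)}`. -/
def BAut (G : ∀ j, GBA (Qs j) A (m j)) (_rew : Fin n → ℕ) :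
    BA ((∀ j, Qs j) × BComp n m) A where
  init := (fun j => (G j).init, none)
  trans := {t | (∀ j, (t.1.1 j, t.2.1, t.2.2.1 j) ∈ (G j).trans) ∧
              CompStep G t.1.1 t.1.2 t.2.2.2}
  acc := {p | p.2 = none}

/-- The weight function `W : δ → ℕ` of the weighted Büchi automaton `B`. -/
def BWeight (rew : Fin n → ℕ) (p : (∀ j, Qs j) × BComp n m) (_ : A)
    (p' : (∀ j, Qs j) × BComp n m) : ℕ :=
  CompWeight rew p.2 p'.2

open Classical in
/-- The reward of a trace `τ` of `T`: `Rew(τ) = Σ_{i, w(τ) ∈ L(G_i)} rew_i`. -/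
noncomputable def TraceRew {S : Type*} (T : LTS S A) (G : ∀ j, GBA (Qs j) A (m j))
    (rew : Fin n → ℕ) (τ : ℕ → S) : ℕ :=
  ∑ j : Fin n, if T.word τ ∈ (G j).Lang then rew j else 0

end Construction

section Proof10

variable {A : Type*} {n : ℕ} {Qs : Fin n → Type*} {m : Fin n → ℕ}

/-- If the weight of a `B`-step is nonzero, it enters the first level of some layer. -/
lemma weight_char (rew : Fin n → ℕ) (c c' : BComp n m) (h : CompWeight rew c c' ≠ 0) :
    ∃ jl' : Σ j : Fin n, Fin (m j), c' = some jl' ∧ (jl'.2 : ℕ) = 0 ∧ c ≠ some jl' ∧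
      CompWeight rew c c' = rew jl'.1 := by
  cases c' with
  | none => simp [CompWeight] at h
  | some jl' =>
    have hred : CompWeight rew c (some jl')
        = if (jl'.2 : ℕ) = 0 ∧ c ≠ some jl' then rew jl'.1 else 0 := rfl
    rw [hred] at h
    split_ifs at h with hcond
    · exact ⟨jl', rfl, hcond.1, hcond.2, by rw [hred, if_pos hcond]⟩
    · exact absurd rfl h

/-- Starting in `(j, l)` before a time `k` at which the component is `(0,0)`, there is
a time `v < k` at which the run leaves `(j, l)`, witnessing acceptance of `F_j^l`, and
moving to `(j, l+1)` when `l+1 < m j`. -/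
lemma leave_lemma (G : ∀ j, GBA (Qs j) A (m j)) (qs : ℕ → ∀ j, Qs j)
    (comp : ℕ → BComp n m)
    (hstep : ∀ t, CompStep G (qs t) (comp t) (comp (t + 1)))
    {k u : ℕ} (hk : comp k = none) (hu : u ≤ k)
    {j : Fin n} {l : Fin (m j)} (hcu : comp u = some ⟨j, l⟩) :
    ∃ v, u ≤ v ∧ v < k ∧ comp v = some ⟨j, l⟩ ∧ qs v j ∈ (G j).acc l ∧
      ∀ h : (l : ℕ) + 1 < m j, comp (v + 1) = some ⟨j, ⟨(l : ℕ) + 1, h⟩⟩ := by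
  classical
  have hex : ∃ d, comp (u + d) ≠ some ⟨j, l⟩ := by
    refine ⟨k - u, ?_⟩
    rw [Nat.add_sub_cancel' hu, hk]
    exact fun h => Option.some_ne_none _ h.symm
  have hspec : comp (u + Nat.find hex) ≠ some ⟨j, l⟩ := Nat.find_spec hex
  have hd0pos : 0 < Nat.find hex := by
    rcases Nat.eq_zero_or_pos (Nat.find hex) with h | h
    · exfalso; apply hspec; rw [h]; simpa using hcu
    · exact h
  have hd0le : Nat.find hex ≤ k - u := Nat.find_min' hex (by
    rw [Nat.add_sub_cancel' hu, hk]; exact fun h => Option.some_ne_none _ h.symm)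
  set v := u + (Nat.find hex - 1) with hv
  have hv1 : v + 1 = u + Nat.find hex := by omega
  have hcv : comp v = some ⟨j, l⟩ := by
    by_contra h
    exact Nat.find_min hex (show Nat.find hex - 1 < Nat.find hex by omega) h
  have hvk : v < k := by omega
  have hnext : comp (v + 1) ≠ some ⟨j, l⟩ := by rw [hv1]; exact hspec
  have hs := hstep v
  rw [hcv] at hs
  rcases e : comp (v + 1) with _ | jl'
  · rw [e] at hs
    simp only [CompStep] at hs
    exact ⟨v, by omega, hvk, hcv, hs.2, fun h => absurd hs.1 h.ne⟩
  · rw [e] at hs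
    obtain ⟨jj, ll⟩ := jl'
    simp only [CompStep] at hs
    rcases hs with ⟨h1, h2, h3⟩ | ⟨h1, h2, h3⟩ | ⟨h1, h2, h3, h4⟩
    · exfalso
      apply hnext
      rw [e]
      have h1' : jj = j := h1
      subst h1'
      have h2' : (ll : ℕ) = (l : ℕ) := h2
      exact congrArg some (congrArg (Sigma.mk jj) (Fin.ext h2'))
    · refine ⟨v, by omega, hvk, hcv, h3, fun h => ?_⟩
      rw [e]
      have h1' : jj = j := h1
      subst h1'
      have h2' : (ll : ℕ) = (l : ℕ) + 1 := h2
      exact congrArg some (congrArg (Sigma.mk jj) (Fin.ext h2'))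
    · refine ⟨v, by omega, hvk, hcv, h4, fun h => absurd h2 ?_⟩
      omega

/-- From an entry into `(j, 0)` before a time `k` at which the component is `(0,0)`,
every acceptance set `F_j^l` is witnessed strictly before `k`. -/
lemma climb_lemma (G : ∀ j, GBA (Qs j) A (m j)) (hm : ∀ j, 0 < m j)
    (qs : ℕ → ∀ j, Qs j) (comp : ℕ → BComp n m)
    (hstep : ∀ t, CompStep G (qs t) (comp t) (comp (t + 1)))
    {k u : ℕ} (hk : comp k = none) (hu : u ≤ k)
    {j : Fin n} (hcu : comp u = some ⟨j, ⟨0, hm j⟩⟩) (l : Fin (m j)) :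
    ∃ v, u ≤ v ∧ v < k ∧ qs v j ∈ (G j).acc l := by
  have reach : ∀ lv, ∀ hlv : lv < m j,
      ∃ v, u ≤ v ∧ v ≤ k ∧ comp v = some ⟨j, ⟨lv, hlv⟩⟩ := by
    intro lv
    induction lv with
    | zero => exact fun hlv => ⟨u, le_refl u, hu, hcu⟩
    | succ lv ih =>
      intro hlv
      obtain ⟨v, hv1, hv2, hv3⟩ := ih (by omega)
      obtain ⟨v', h1, h2, h3, h4, h5⟩ := leave_lemma G qs comp hstep hk hv2 hv3
      exact ⟨v' + 1, by omega, by omega, h5 hlv⟩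
  obtain ⟨l, hl⟩ := l
  obtain ⟨v, hv1, hv2, hv3⟩ := reach l hl
  have hvk : v < k := by
    rcases eq_or_lt_of_le hv2 with h | h
    · exfalso; rw [h, hk] at hv3; exact Option.some_ne_none _ hv3.symm
    · exact h
  obtain ⟨v', h1, h2, h3, h4, _⟩ := leave_lemma G qs comp hstep hk hvk.le hv3
  exact ⟨v', le_trans hv1 h1, h2, h4⟩

/-- As long as the component stays away from `(0,0)`, the layer is nondecreasing. -/
lemma layer_mono (G : ∀ j, GBA (Qs j) A (m j)) (qs : ℕ → ∀ j, Qs j)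
    (comp : ℕ → BComp n m)
    (hstep : ∀ t, CompStep G (qs t) (comp t) (comp (t + 1)))
    {a b : ℕ} (hab : a ≤ b) :
    ∀ (hnn : ∀ t, a ≤ t → t ≤ b → comp t ≠ none)
      {jla jlb : Σ j : Fin n, Fin (m j)},
      comp a = some jla → comp b = some jlb → (jla.1 : ℕ) ≤ (jlb.1 : ℕ) := by
  induction b, hab using Nat.le_induction with
  | base =>
    intro hnn jla jlb ha hb
    rw [ha] at hb
    injection hb with h
    rw [h]
  | succ b hab ih =>
    intro hnn jla jlb ha hb
    have hcb : comp b ≠ none := hnn b (by omega) (by omega)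
    rcases e : comp b with _ | jlmid
    · exact absurd e hcb
    have hle : (jla.1 : ℕ) ≤ (jlmid.1 : ℕ) :=
      ih (fun t h1 h2 => hnn t h1 (by omega)) ha e
    have hs := hstep b
    rw [e, hb] at hs
    simp only [CompStep] at hs
    rcases hs with ⟨h1, _, _⟩ | ⟨h1, _, _⟩ | ⟨h1, _, _, _⟩
    · have h1' : (jlb.1 : ℕ) = (jlmid.1 : ℕ) := congrArg Fin.val h1
      omega
    · have h1' : (jlb.1 : ℕ) = (jlmid.1 : ℕ) := congrArg Fin.val h1
      omega
    · omega

end Proof10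

/-- for every trace `τ` of `T` and every accepting run `ρ'_P` of
`P = T ⊗ B` projecting onto `τ`, `C(ρ'_P) ≤ Rew(τ)`. -/
theorem statement10 {S A : Type*} [Finite S] [Finite A] {n : ℕ} {Qs : Fin n → Type*}
    [∀ j, Finite (Qs j)] {m : Fin n → ℕ} (hm : ∀ j, 0 < m j)
    (G : ∀ j, GBA (Qs j) A (m j)) (hnb : ∀ j, (G j).NonBlocking)
    (rew : Fin n → ℕ) (hrew : ∀ i j : Fin n, i ≤ j → rew j ≤ rew i)
    (T : LTS S A) (τ : ℕ → S) (htr : T.IsTrace τ)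
    (ρ : ℕ → S × ((∀ j, Qs j) × BComp n m)) (c : ℕ)
    (hρ : IsProdRun T (BAut G rew) ρ) (hacc : IsProdAccepting T (BAut G rew) ρ)
    (hproj : ∀ i, (ρ i).1 = τ i)
    (hc : RunRewardIs (ProdAcc T (BAut G rew)) ρ (ProdStepW T (BWeight rew) ρ) c) :
    c ≤ TraceRew T G rew τ := by
  classical
  -- basic unfolded facts about the run
  have hstep : ∀ t, CompStep G ((ρ t).2.1) ((ρ t).2.2) ((ρ (t + 1)).2.2) := by
    intro t
    have h := hρ.2 t
    simp only [ProdTrans, BAut, Set.mem_setOf_eq] at h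
    exact h.2.2
  have htj : ∀ t (j : Fin n),
      ((ρ t).2.1 j, T.word τ t, (ρ (t + 1)).2.1 j) ∈ (G j).trans := by
    intro t j
    have h := hρ.2 t
    simp only [ProdTrans, BAut, Set.mem_setOf_eq] at h
    have h' := h.2.1 j
    rwa [hproj t] at h'
  rcases Nat.eq_zero_or_pos c with hc0 | hcpos
  · exact hc0 ▸ Nat.zero_le _
  -- "good" layers: every acceptance set of G j is visited infinitely often
  set GoodP : Fin n → Prop :=
    fun j => ∀ (l : Fin (m j)) (N : ℕ), ∃ u, N ≤ u ∧ (ρ u).2.1 j ∈ (G j).acc l with hGoodP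
  have hGoodLang : ∀ j, GoodP j → T.word τ ∈ (G j).Lang := by
    intro j hg
    refine ⟨fun t => (ρ t).2.1 j, ⟨?_, fun t => htj t j⟩, fun l N => hg l N⟩
    show (ρ 0).2.1 j = (G j).init
    rw [hρ.1]
    rfl
  -- a bound past which no bad layer can be entered
  have hbadN : ∀ j : Fin n, ∃ N, ¬ GoodP j →
      ∃ l : Fin (m j), ∀ u, N ≤ u → (ρ u).2.1 j ∉ (G j).acc l := by
    intro j
    by_cases hj : GoodP j
    · exact ⟨0, fun h => absurd hj h⟩
    · have hj' := hj
      rw [hGoodP] at hj'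
      obtain ⟨l, hl⟩ := not_forall.1 hj'
      obtain ⟨N, hN⟩ := not_forall.1 hl
      exact ⟨N, fun _ => ⟨l, fun u hu hmem => hN ⟨u, hu, hmem⟩⟩⟩
  choose NB hNB using hbadN
  set N0 := Finset.univ.sup NB with hN0
  obtain ⟨i, k, hNi, hfrag, hw⟩ := hc.1 N0
  obtain ⟨hik, hFi, hFk, hint⟩ := hfrag
  have hk : (ρ k).2.2 = none := hFk
  have hintc : ∀ t, i < t → t < k → (ρ t).2.2 ≠ none := fun t h1 h2 hn =>
    hint t h1 h2 hn
  set stepW := ProdStepW T (BWeight rew) ρ with hstepW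
  have hWred : ∀ t, stepW t = CompWeight rew ((ρ t).2.2) ((ρ (t + 1)).2.2) :=
    fun t => rfl
  set E := (Finset.Ico i k).filter (fun t => stepW t ≠ 0) with hE
  have hsumE : SegWeight stepW i k = ∑ t ∈ E, stepW t :=
    (Finset.sum_filter_ne_zero _).symm
  -- the weight-characterization at members of E
  have hWchar : ∀ t ∈ E, ∃ jl' : Σ j : Fin n, Fin (m j),
      (ρ (t + 1)).2.2 = some jl' ∧ (jl'.2 : ℕ) = 0 ∧ (ρ t).2.2 ≠ some jl' ∧
      stepW t = rew jl'.1 := by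
    intro t ht
    have hne := (Finset.mem_filter.1 ht).2
    rw [hWred t] at hne
    obtain ⟨jl', h1, h2, h3, h4⟩ := weight_char rew _ _ hne
    exact ⟨jl', h1, h2, h3, by rw [hWred t, h4]⟩
  -- E is nonempty, providing a default element of Fin n
  have hEne : ∃ t, t ∈ E := by
    by_contra hno
    push_neg at hno
    have : SegWeight stepW i k = 0 := by
      rw [hsumE]
      exact Finset.sum_eq_zero (fun t ht => absurd ht (hno t))
    omega
  obtain ⟨t00, ht00⟩ := hEne
  obtain ⟨jl00, -, -, -, -⟩ := hWchar t00 ht00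
  set ef : ℕ → Fin n := fun t => Option.elim ((ρ (t + 1)).2.2) jl00.1 Sigma.fst
    with hef
  have hefval : ∀ t (jl' : Σ j : Fin n, Fin (m j)),
      (ρ (t + 1)).2.2 = some jl' → ef t = jl'.1 := by
    intro t jl' h
    rw [hef]
    simp only
    rw [h]
    rfl
  -- strict monotonicity of entered layers within the fragment
  have hlt : ∀ t1 ∈ E, ∀ t2 ∈ E, t1 < t2 → ((ef t1 : ℕ) < (ef t2 : ℕ)) := by
    intro t1 h1 t2 h2 h12
    obtain ⟨jl1, hc1, hl1, hne1, hw1⟩ := hWchar t1 h1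
    obtain ⟨jl2, hc2, hl2, hne2, hw2⟩ := hWchar t2 h2
    have hm1 := Finset.mem_Ico.1 (Finset.mem_filter.1 h1).1
    have hm2 := Finset.mem_Ico.1 (Finset.mem_filter.1 h2).1
    have hnn2 : (ρ t2).2.2 ≠ none := hintc t2 (by omega) hm2.2
    rcases e2 : (ρ t2).2.2 with _ | jl2s
    · exact absurd e2 hnn2
    have hs2 := hstep t2
    rw [e2, hc2] at hs2
    simp only [CompStep] at hs2
    rw [hefval t1 jl1 hc1, hefval t2 jl2 hc2]
    rcases hs2 with ⟨hj, hlv, _⟩ | ⟨hj, hlv, _⟩ | ⟨hjlt, _, _, _⟩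
    · exfalso
      apply hne2
      rw [e2]
      obtain ⟨jj, ll⟩ := jl2
      obtain ⟨jjs, lls⟩ := jl2s
      have hj' : jj = jjs := hj
      subst hj'
      have hlv' : (ll : ℕ) = (lls : ℕ) := hlv
      exact (congrArg some (congrArg (Sigma.mk jj) (Fin.ext hlv'))).symm
    · exfalso
      have hlv' : (jl2.2 : ℕ) = (jl2s.2 : ℕ) + 1 := hlv
      omega
    · have hmono : (jl1.1 : ℕ) ≤ (jl2s.1 : ℕ) := by
        refine layer_mono G (fun t => (ρ t).2.1) (fun t => (ρ t).2.2) hstep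
          (show t1 + 1 ≤ t2 by omega) ?_ hc1 e2
        intro t ha hb
        exact hintc t (by omega) (by omega)
      have hjlt' : (jl2s.1 : ℕ) < (jl2.1 : ℕ) := hjlt
      omega
  have hinj : ∀ t1 ∈ E, ∀ t2 ∈ E, ef t1 = ef t2 → t1 = t2 := by
    intro t1 h1 t2 h2 heq
    rcases lt_trichotomy t1 t2 with h | h | h
    · have := hlt t1 h1 t2 h2 h
      rw [heq] at this
      omega
    · exact h
    · have := hlt t2 h2 t1 h1 h
      rw [heq] at this
      omega
  -- every layer entered in this late fragment is good
  have himg : ∀ t ∈ E, GoodP (ef t) := by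
    intro t ht
    obtain ⟨jl', hc', hl', -, -⟩ := hWchar t ht
    obtain ⟨j1, l1⟩ := jl'
    rw [hefval t ⟨j1, l1⟩ hc']
    by_contra hbad
    obtain ⟨l, hl⟩ := hNB j1 hbad
    have hmem := Finset.mem_Ico.1 (Finset.mem_filter.1 ht).1
    have hentry : (ρ (t + 1)).2.2 = some ⟨j1, ⟨0, hm j1⟩⟩ := by
      rw [hc']
      exact congrArg some (congrArg (Sigma.mk j1) (Fin.ext hl'))
    obtain ⟨v, hv1, hv2, hv3⟩ := climb_lemma G hm (fun t => (ρ t).2.1)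
      (fun t => (ρ t).2.2) hstep hk (show t + 1 ≤ k by omega) hentry l
    have hNBle : NB j1 ≤ N0 := Finset.le_sup (Finset.mem_univ j1)
    exact hl v (by omega) hv3
  -- put everything together
  calc c = SegWeight stepW i k := hw.symm
    _ = ∑ t ∈ E, stepW t := hsumE
    _ = ∑ t ∈ E, rew (ef t) := by
        refine Finset.sum_congr rfl (fun t ht => ?_)
        obtain ⟨jl', hc', -, -, hw'⟩ := hWchar t ht
        rw [hw', hefval t jl' hc']
    _ = ∑ j ∈ E.image ef, rew j := (Finset.sum_image hinj).symm
    _ ≤ ∑ j ∈ Finset.univ.filter GoodP, rew j := by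
        refine Finset.sum_le_sum_of_subset ?_
        intro j hj
        obtain ⟨t, ht, rfl⟩ := Finset.mem_image.1 hj
        exact Finset.mem_filter.2 ⟨Finset.mem_univ _, himg t ht⟩
    _ ≤ ∑ j ∈ Finset.univ.filter (fun j => T.word τ ∈ (G j).Lang), rew j := by
        refine Finset.sum_le_sum_of_subset ?_
        intro j hj
        exact Finset.mem_filter.2 ⟨Finset.mem_univ _,
          hGoodLang j (Finset.mem_filter.1 hj).2⟩
    _ = TraceRew T G rew τ := by
        rw [TraceRew, Finset.sum_filter]
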